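/- Volkov exponent equivalence: let K₁,…,Kₙ be null complex 4-vectors (Kᵢ·Kᵢ = 0) such that the total sum Σᵢ Kᵢ has vanishing +, z and z̃ lightfront components (3-momentum conservation transverse to a null direction n). Set 𝕂 := Σ_{i≠n} Kᵢ (omitting the last vector). Then 𝕂·𝕂 / (2 𝕂₊) = Σᵢ Kᵢ₋, provided 𝕂₊ ≠ 0, where v₊ and v₋ denote the lightfront components of a vector v. -/
import Mathlib


/-- Lightfront Minkowski pairing on components (v₊, v₋, v_z, v_z̃) indexed 0, 1, 2, 3:
v·w = v₊w₋ + v₋w₊ − v_z w_z̃ − v_z̃ w_z. -/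
def ldot (p q : Fin 4 → ℂ) : ℂ := p 0 * q 1 + p 1 * q 0 - p 2 * q 3 - p 3 * q 2

/-- Scalar version of the key algebraic identity. -/
lemma volkov_key (a0 a1 a2 a3 b0 b1 b2 b3 : ℂ) (ha : a0 ≠ 0)
    (h0 : a0 + b0 = 0) (h2 : a2 + b2 = 0) (h3 : a3 + b3 = 0)
    (hn : b0 * b1 + b1 * b0 - b2 * b3 - b3 * b2 = 0) :
    (a0 * a1 + a1 * a0 - a2 * a3 - a3 * a2) / (2 * a0) = a1 + b1 := by
  field_simp
  linear_combination (-2 * a3) * h2 - 2 * b1 * h0 + 2 * b2 * h3 + hn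

/-- Volkov exponent equivalence: for null vectors K₁,…,K_{n+1} whose total sum has
vanishing +, z and z̃ lightfront components, and 𝕂 the sum omitting the last vector with
𝕂₊ ≠ 0, one has 𝕂·𝕂/(2𝕂₊) = Σᵢ Kᵢ₋. -/
theorem volkov_exponent_equivalence (n : ℕ) (K : Fin (n + 1) → Fin 4 → ℂ)
    (hnull : ∀ i, ldot (K i) (K i) = 0)
    (hplus : ∑ i, K i 0 = 0) (hz : ∑ i, K i 2 = 0) (hzt : ∑ i, K i 3 = 0)
    (𝕂 : Fin 4 → ℂ) (h𝕂 : 𝕂 = ∑ i : Fin n, K i.castSucc)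
    (h𝕂p : 𝕂 0 ≠ 0) :
    ldot 𝕂 𝕂 / (2 * 𝕂 0) = ∑ i, K i 1 := by
  have hs : ∀ j, (∑ i : Fin (n + 1), K i j) = 𝕂 j + K (Fin.last n) j := by
    intro j
    rw [h𝕂, Fin.sum_univ_castSucc]
    simp [Finset.sum_apply]
  have h0 := hplus; rw [hs 0] at h0
  have h2 := hz; rw [hs 2] at h2
  have h3 := hzt; rw [hs 3] at h3
  have hn := hnull (Fin.last n)
  unfold ldot at hn ⊢
  rw [hs 1]
  exact volkov_key (𝕂 0) (𝕂 1) (𝕂 2) (𝕂 3) _ _ _ _ h𝕂p h0 h2 h3 hn
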